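/- Let T be a finite tree rooted at v_r and w : V(T) → ℝ a nonnegative weight function with total weight 1. Then either there exists a path in T starting from v_r whose vertex set has weight at least 1/4, or there exist two disjoint sets A, B of nodes, each of weight at least 1/4, such that no vertex of A is an ancestor or descendant of any vertex of B. -/

import Mathlib

open SimpleGraph Finset

/-- In a tree `T` rooted at `root`, `x` is an ancestor of `y` if `x ≠ y` and
`x` lies on the (unique) path from `root` to `y`. -/
def IsAncestor {V : Type*} (T : SimpleGraph V) (root x y : V) : Prop :=
  x ≠ y ∧ ∀ p : T.Walk root y, p.IsPath → x ∈ p.support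

lemma split_family {α : Type*} [DecidableEq α] (F : Finset α) (f : α → ℝ)
    (h0 : ∀ c ∈ F, 0 ≤ f c) (h2 : ∀ c ∈ F, f c ≤ 1/2)
    (h34 : 3/4 ≤ ∑ c ∈ F, f c) :
    ∃ G, G ⊆ F ∧ 1/4 ≤ ∑ c ∈ G, f c ∧ 1/4 ≤ ∑ c ∈ F \ G, f c := by
  classical
  by_cases hx : ∃ c ∈ F, 1/4 ≤ f c
  · obtain ⟨c, hcF, hc⟩ := hx
    refine ⟨{c}, by simpa using hcF, by simpa using hc, ?_⟩
    have hsub : {c} ⊆ F := by simpa using hcF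
    have := Finset.sum_sdiff (f := f) hsub
    have hc2 := h2 c hcF
    simp only [Finset.sum_singleton] at this
    linarith
  · push_neg at hx
    have hFmem : F ∈ F.powerset.filter (fun G => 1/4 ≤ ∑ c ∈ G, f c) := by
      simp [Finset.mem_filter, Finset.mem_powerset]
      linarith
    obtain ⟨G, hGmem, hGmin⟩ := Finset.exists_min_image _ Finset.card ⟨F, hFmem⟩
    rw [Finset.mem_filter, Finset.mem_powerset] at hGmem
    obtain ⟨hGF, hG14⟩ := hGmem
    have hGne : G.Nonempty := by
      rcases G.eq_empty_or_nonempty with h | h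
      · exfalso; rw [h] at hG14; simp at hG14; linarith
      · exact h
    obtain ⟨c, hcG⟩ := hGne
    have herase : ¬ (1/4 ≤ ∑ x ∈ G.erase c, f x) := by
      intro habs
      have hmem : G.erase c ∈ F.powerset.filter (fun G => 1/4 ≤ ∑ c ∈ G, f c) := by
        rw [Finset.mem_filter, Finset.mem_powerset]
        exact ⟨(Finset.erase_subset _ _).trans hGF, habs⟩
      have := hGmin _ hmem
      have := Finset.card_erase_lt_of_mem hcG
      omega
    push_neg at herase
    have hGsum : ∑ x ∈ G, f x = f c + ∑ x ∈ G.erase c, f x :=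
      (Finset.add_sum_erase _ f hcG).symm
    have hfc : f c < 1/4 := hx c (hGF hcG)
    have hsd := Finset.sum_sdiff (f := f) hGF
    exact ⟨G, hGF, hG14, by linarith⟩


section Key
variable {V : Type*} [Fintype V] [DecidableEq V]
variable (le : V → V → Prop) [DecidableRel le]

/-- closed upset -/
def upS (v : V) : Finset V := univ.filter (fun x => le v x)
/-- closed downset -/
def dnS (v : V) : Finset V := univ.filter (fun x => le x v)

variable {le}
variable (hrefl : ∀ x, le x x)
    (htrans : ∀ {x y z}, le x y → le y z → le x z)
    (hanti : ∀ {x y}, le x y → le y x → x = y)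
    (hchain : ∀ {x y z}, le x z → le y z → le x y ∨ le y x)

include hrefl htrans hanti hchain in
lemma key (w : V → ℝ) (hw : ∀ x, 0 ≤ w x) (hsum : ∑ x, w x = 1)
    (hsmall : ∀ u, ∑ x ∈ dnS le u, w x < 1/4) :
    ∀ n (v : V), (upS le v).card ≤ n →
    ∃ F : Finset V,
      (∀ c ∈ F, le v c ∧ c ≠ v) ∧
      (∀ c ∈ F, ∀ c' ∈ F, c ≠ c' → ¬ le c c') ∧
      (∀ c ∈ F, ∑ x ∈ upS le c, w x ≤ 1/2) ∧
      (∑ x ∈ upS le v, w x) + (∑ x ∈ dnS le v, w x) - w v - 1/4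
        ≤ ∑ c ∈ F, ∑ x ∈ upS le c, w x := by
  intro n
  induction n with
  | zero =>
    intro v hcard
    exfalso
    have : v ∈ upS le v := by simp [upS, hrefl]
    have := Finset.card_pos.2 ⟨v, this⟩
    omega
  | succ n ih =>
    intro v hcard
    -- the set of covers of v
    set C : Finset V := univ.filter
        (fun c => le v c ∧ c ≠ v ∧ ∀ z, le v z → z ≠ v → le z c → z = c) with hC
    have hCmem : ∀ c, c ∈ C ↔ le v c ∧ c ≠ v ∧ ∀ z, le v z → z ≠ v → le z c → z = c := by
      intro c; simp [hC]
    -- every strict upper element is above a cover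
    have hcov : ∀ x, le v x → x ≠ v → ∃ c ∈ C, le c x := by
      intro x hvx hxv
      set S : Finset V := univ.filter (fun z => le v z ∧ z ≠ v ∧ le z x) with hS
      have hxS : x ∈ S := by simp [hS, hvx, hxv, hrefl]
      obtain ⟨c, hcS, hcmin⟩ := Finset.exists_min_image S (fun c => (dnS le c).card) ⟨x, hxS⟩
      rw [hS, Finset.mem_filter] at hcS
      obtain ⟨-, hvc, hcv, hcx⟩ := hcS
      refine ⟨c, (hCmem c).2 ⟨hvc, hcv, ?_⟩, hcx⟩
      intro z hvz hzv hzc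
      by_contra hne
      have hzS : z ∈ S := by
        rw [hS, Finset.mem_filter]
        exact ⟨Finset.mem_univ _, hvz, hzv, htrans hzc hcx⟩
      have hsub : dnS le z ⊂ dnS le c := by
        constructor
        · intro a ha
          rw [dnS, Finset.mem_filter] at ha ⊢
          exact ⟨ha.1, htrans ha.2 hzc⟩
        · intro habs
          have : c ∈ dnS le z := habs (by simp [dnS, hrefl])
          rw [dnS, Finset.mem_filter] at this
          exact hne (hanti hzc this.2)
      have := Finset.card_lt_card hsub
      have := hcmin z hzS
      omega
    -- distinct covers incomparable
    have hCinc : ∀ c ∈ C, ∀ c' ∈ C, c ≠ c' → ¬ le c c' := by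
      intro c hc c' hc' hne habs
      rw [hCmem] at hc hc'
      exact hne (hc'.2.2 c hc.1 hc.2.1 habs)
    -- cover upsets are pairwise disjoint
    have hCdisj : (↑C : Set V).PairwiseDisjoint (upS le) := by
      intro c hc c' hc' hne
      simp only [Function.onFun]
      rw [Finset.disjoint_left]
      intro x hx hx'
      rw [upS, Finset.mem_filter] at hx hx'
      rcases hchain hx.2 hx'.2 with h | h
      · exact hCinc c (by exact hc) c' (by exact hc') hne h
      · exact hCinc c' (by exact hc') c (by exact hc) (Ne.symm hne) h
    -- decomposition of upS v
    have hupdecomp : upS le v = insert v (C.biUnion (upS le)) := by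
      ext x
      simp only [Finset.mem_insert, Finset.mem_biUnion, upS, Finset.mem_filter,
        Finset.mem_univ, true_and]
      constructor
      · intro hvx
        by_cases hxv : x = v
        · left; exact hxv
        · right
          obtain ⟨c, hcC, hcx⟩ := hcov x hvx hxv
          exact ⟨c, hcC, hcx⟩
      · rintro (rfl | ⟨c, hcC, hcx⟩)
        · exact hrefl _
        · rw [hCmem] at hcC
          exact htrans hcC.1 hcx
    have hvnotin : v ∉ C.biUnion (upS le) := by
      simp only [Finset.mem_biUnion, upS, Finset.mem_filter, Finset.mem_univ, true_and]
      rintro ⟨c, hcC, hcv⟩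
      rw [hCmem] at hcC
      exact hcC.2.1 (hanti hcC.1 hcv).symm
    have hUdecomp : ∑ x ∈ upS le v, w x = w v + ∑ c ∈ C, ∑ x ∈ upS le c, w x := by
      rw [hupdecomp, Finset.sum_insert hvnotin, Finset.sum_biUnion hCdisj]
    -- upsets bounded by 1
    have hUle1 : ∀ u : V, ∑ x ∈ upS le u, w x ≤ 1 := by
      intro u
      rw [← hsum]
      exact Finset.sum_le_sum_of_subset_of_nonneg (Finset.subset_univ _)
        (fun x _ _ => hw x)
    rcases C.eq_empty_or_nonempty with hCe | hCne
    · -- v is maximal: U v = w v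
      refine ⟨∅, by simp, by simp, by simp, ?_⟩
      rw [hUdecomp, hCe]
      simp only [Finset.sum_empty, add_zero]
      have := hsmall v
      linarith
    · -- pick cover with max upset weight
      obtain ⟨c1, hc1C, hc1max⟩ :=
        Finset.exists_max_image C (fun c => ∑ x ∈ upS le c, w x) hCne
      have hc1 := (hCmem c1).1 hc1C
      -- apply ih at c1
      have hsubset : upS le c1 ⊂ upS le v := by
        constructor
        · intro x hx
          rw [upS, Finset.mem_filter] at hx ⊢
          exact ⟨hx.1, htrans hc1.1 hx.2⟩
        · intro habs
          have : v ∈ upS le c1 := habs (by simp [upS, hrefl])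
          rw [upS, Finset.mem_filter] at this
          exact hc1.2.1 (hanti hc1.1 this.2).symm
      have hcard' : (upS le c1).card ≤ n := by
        have := Finset.card_lt_card hsubset
        omega
      obtain ⟨F', hF'1, hF'2, hF'3, hF'4⟩ := ih c1 hcard'
      -- D c1 = w c1 + D v
      have hdn : dnS le c1 = insert c1 (dnS le v) := by
        ext x
        simp only [Finset.mem_insert, dnS, Finset.mem_filter, Finset.mem_univ, true_and]
        constructor
        · intro hxc1
          by_cases hxv : x = v
          · right; rw [hxv]; exact hrefl _
          · rcases hchain hxc1 hc1.1 with h | h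
            · right; exact h
            · left; exact (hc1.2.2 x h hxv hxc1)
        · rintro (rfl | hxv)
          · exact hrefl _
          · exact htrans hxv hc1.1
      have hc1notdn : c1 ∉ dnS le v := by
        rw [dnS, Finset.mem_filter]
        rintro ⟨-, h⟩
        exact hc1.2.1 (hanti hc1.1 h).symm
      have hDc1 : ∑ x ∈ dnS le c1, w x = w c1 + ∑ x ∈ dnS le v, w x := by
        rw [hdn, Finset.sum_insert hc1notdn]
      -- the combined family
      have hdisjF : Disjoint (C.erase c1) F' := by
        rw [Finset.disjoint_left]
        intro c hcE hcF'
        have hcC := Finset.mem_of_mem_erase hcE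
        have hne := Finset.ne_of_mem_erase hcE
        have h1 := (hF'1 c hcF').1  -- le c1 c
        have hc' := (hCmem c).1 hcC
        exact hne (hc'.2.2 c1 hc1.1 hc1.2.1 h1).symm
      refine ⟨(C.erase c1) ∪ F', ?_, ?_, ?_, ?_⟩
      · intro c hc
        rcases Finset.mem_union.1 hc with hcE | hcF'
        · have hc' := (hCmem c).1 (Finset.mem_of_mem_erase hcE)
          exact ⟨hc'.1, hc'.2.1⟩
        · obtain ⟨h1, h2⟩ := hF'1 c hcF'
          refine ⟨htrans hc1.1 h1, ?_⟩
          rintro rfl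
          exact hc1.2.1 (hanti h1 hc1.1)
      · -- pairwise incomparable
        have cross : ∀ c ∈ C.erase c1, ∀ z ∈ F', ¬ le c z ∧ ¬ le z c := by
          intro c hcE z hzF'
          have hcC := Finset.mem_of_mem_erase hcE
          have hne := Finset.ne_of_mem_erase hcE
          have hc' := (hCmem c).1 hcC
          obtain ⟨h1, h2⟩ := hF'1 z hzF'
          constructor
          · intro habs
            rcases hchain habs h1 with h | h
            · exact hne (hc1.2.2 c hc'.1 hc'.2.1 h)
            · exact hne (hc'.2.2 c1 hc1.1 hc1.2.1 h).symm
          · intro habs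
            exact hne (hc'.2.2 c1 hc1.1 hc1.2.1 (htrans h1 habs)).symm
        intro c hc c' hc' hne
        rcases Finset.mem_union.1 hc with h1 | h1 <;>
          rcases Finset.mem_union.1 hc' with h2 | h2
        · exact hCinc c (Finset.mem_of_mem_erase h1) c' (Finset.mem_of_mem_erase h2) hne
        · exact (cross c h1 c' h2).1
        · exact (cross c' h2 c h1).2
        · exact hF'2 c h1 c' h2 hne
      · -- upset weights ≤ 1/2
        intro c hc
        rcases Finset.mem_union.1 hc with hcE | hcF'
        · have hcC := Finset.mem_of_mem_erase hcE
          have hne := Finset.ne_of_mem_erase hcE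
          have hmax := hc1max c hcC
          have hdisj : Disjoint (upS le c) (upS le c1) :=
            hCdisj (by exact hcC) (by exact hc1C) hne
          have : ∑ x ∈ upS le c, w x + ∑ x ∈ upS le c1, w x
              = ∑ x ∈ upS le c ∪ upS le c1, w x := (Finset.sum_union hdisj).symm
          have hle1 : ∑ x ∈ upS le c ∪ upS le c1, w x ≤ 1 := by
            rw [← hsum]
            exact Finset.sum_le_sum_of_subset_of_nonneg (Finset.subset_univ _)
              (fun x _ _ => hw x)
          linarith
        · exact hF'3 c hcF'
      · -- the weight bound
        rw [Finset.sum_union hdisjF]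
        have hCsum : ∑ x ∈ upS le c1, w x + ∑ c ∈ C.erase c1, ∑ x ∈ upS le c, w x
            = ∑ c ∈ C, ∑ x ∈ upS le c, w x := Finset.add_sum_erase C (fun c => ∑ x ∈ upS le c, w x) hc1C
        rw [hDc1] at hF'4
        linarith

end Key


section Graph
variable {V : Type*} [DecidableEq V] {T : SimpleGraph V}

/-- The unique path from `vr` to `y` in a tree. -/
noncomputable def rpath (hT : T.IsTree) (vr y : V) : T.Walk vr y :=
  (hT.existsUnique_path vr y).choose

lemma rpath_isPath (hT : T.IsTree) (vr y : V) : (rpath hT vr y).IsPath :=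
  (hT.existsUnique_path vr y).choose_spec.1

lemma rpath_unique (hT : T.IsTree) {vr y : V} (p : T.Walk vr y) (hp : p.IsPath) :
    p = rpath hT vr y :=
  (hT.existsUnique_path vr y).choose_spec.2 p hp

variable (hT : T.IsTree) (vr : V)

/-- ancestor-or-equal relation -/
def anc (x y : V) : Prop := x ∈ (rpath hT vr y).support

noncomputable instance : DecidableRel (anc hT vr) := fun x y =>
  inferInstanceAs (Decidable (x ∈ (rpath hT vr y).support))

lemma anc_refl (x : V) : anc hT vr x x := Walk.end_mem_support _

lemma anc_bot (x : V) : anc hT vr vr x := Walk.start_mem_support _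

lemma anc_trans {x y z : V} (hxy : anc hT vr x y) (hyz : anc hT vr y z) :
    anc hT vr x z := by
  have hq : ((rpath hT vr z).takeUntil y hyz) = rpath hT vr y :=
    rpath_unique hT _ ((rpath_isPath hT vr z).takeUntil hyz)
  rw [anc, ← hq] at hxy
  exact Walk.support_takeUntil_subset _ hyz hxy

lemma anc_antisymm {x y : V} (hxy : anc hT vr x y) (hyx : anc hT vr y x) :
    x = y := by
  have hq : ((rpath hT vr y).takeUntil x hxy) = rpath hT vr x :=
    rpath_unique hT _ ((rpath_isPath hT vr y).takeUntil hxy)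
  have hr : ((rpath hT vr x).takeUntil y hyx) = rpath hT vr y :=
    rpath_unique hT _ ((rpath_isPath hT vr x).takeUntil hyx)
  have h1 : ((rpath hT vr y).takeUntil x hxy).length ≤ (rpath hT vr y).length :=
    Walk.length_takeUntil_le _ hxy
  have h2 : ((rpath hT vr x).takeUntil y hyx).length ≤ (rpath hT vr x).length :=
    Walk.length_takeUntil_le _ hyx
  rw [hq] at h1
  rw [hr] at h2
  have hlen : (rpath hT vr x).length = (rpath hT vr y).length := le_antisymm h1 h2
  have hspec := (rpath hT vr y).take_spec hxy
  have := congrArg Walk.length hspec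
  rw [Walk.length_append, hq, hlen] at this
  have hdrop : ((rpath hT vr y).dropUntil x hxy).length = 0 := by omega
  exact Walk.eq_of_length_eq_zero hdrop

lemma anc_chain {x y z : V} (hxz : anc hT vr x z) (hyz : anc hT vr y z) :
    anc hT vr x y ∨ anc hT vr y x := by
  set p := rpath hT vr z with hp
  have hpp : p.IsPath := rpath_isPath hT vr z
  have hspec := p.take_spec hxz
  by_cases hy : y ∈ (p.takeUntil x hxz).support
  · right
    have hq : p.takeUntil x hxz = rpath hT vr x :=
      rpath_unique hT _ (hpp.takeUntil hxz)
    rw [hq] at hy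
    exact hy
  · left
    -- y is in the support of the drop part
    have hy' : y ∈ (p.dropUntil x hxz).support := by
      have := hyz
      rw [anc, ← hp, ← hspec, Walk.mem_support_append_iff] at this
      rcases this with h | h
      · exact absurd h hy
      · exact h
    set d := p.dropUntil x hxz with hd
    -- the path vr → y through x
    set q : T.Walk vr y := (p.takeUntil x hxz).append (d.takeUntil y hy') with hqdef
    have hqsupp : q.support = (p.takeUntil x hxz).support
        ++ ((d.takeUntil y hy').support).tail := Walk.support_append _ _
    have hpsupp : p.support = (p.takeUntil x hxz).support ++ d.support.tail := by
      conv_lhs => rw [← hspec]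
      exact Walk.support_append _ _
    have hdsupp : d.support.tail = ((d.takeUntil y hy').support).tail
        ++ ((d.dropUntil y hy').support).tail := by
      conv_lhs => rw [← d.take_spec hy']
      exact Walk.tail_support_append _ _
    have hsub : q.support.Sublist p.support := by
      rw [hqsupp, hpsupp, hdsupp, ← List.append_assoc]
      exact (List.sublist_append_left _ _)
    have hqpath : q.IsPath := by
      rw [Walk.isPath_def _]
      exact hsub.nodup ((Walk.isPath_def _).1 hpp)
    have hq : q = rpath hT vr y := rpath_unique hT _ hqpath
    rw [anc, ← hq, hqdef, Walk.mem_support_append_iff]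
    left
    exact Walk.end_mem_support _

end Graph


/-- Lemma (Bonamy–Bousquet–Thomassé): in a finite tree `T` rooted at `vr` with a
nonnegative weight function of total weight `1`, there is either a path from `vr`
of weight at least `1/4`, or two disjoint unrelated sets each of weight at least `1/4`. -/
theorem stmt_2 {V : Type*} [Fintype V] [DecidableEq V] (T : SimpleGraph V)
    (hT : T.IsTree) (vr : V) (w : V → ℝ) (hw : ∀ x, 0 ≤ w x)
    (hsum : ∑ x, w x = 1) :
    (∃ (u : V) (p : T.Walk vr u), p.IsPath ∧
      (1 : ℝ) / 4 ≤ ∑ x ∈ p.support.toFinset, w x) ∨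
    (∃ A B : Finset V, Disjoint A B ∧
      (1 : ℝ) / 4 ≤ ∑ x ∈ A, w x ∧ (1 : ℝ) / 4 ≤ ∑ x ∈ B, w x ∧
      ∀ x ∈ A, ∀ y ∈ B, ¬ (IsAncestor T vr x y ∨ IsAncestor T vr y x)) := by
  by_cases hbig : ∃ u, (1:ℝ)/4 ≤ ∑ x ∈ dnS (anc hT vr) u, w x
  · obtain ⟨u, hu⟩ := hbig
    left
    refine ⟨u, rpath hT vr u, rpath_isPath hT vr u, ?_⟩
    have heq : (rpath hT vr u).support.toFinset = dnS (anc hT vr) u := by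
      ext x
      rw [dnS, Finset.mem_filter]
      simp [anc]
    rw [heq]
    exact hu
  · push_neg at hbig
    right
    obtain ⟨F, hF1, hF2, hF3, hF4⟩ :=
      key (le := anc hT vr) (anc_refl hT vr) (fun {x y z} => anc_trans hT vr)
        (fun {x y} => anc_antisymm hT vr) (fun {x y z} => anc_chain hT vr)
        w hw hsum hbig (Fintype.card V) vr (Finset.card_le_univ _)
    -- U vr = 1
    have hUvr : ∑ x ∈ upS (anc hT vr) vr, w x = 1 := by
      have : upS (anc hT vr) vr = Finset.univ := by
        ext x; simp [upS, anc_bot hT vr x]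
      rw [this, hsum]
    -- D vr = w vr
    have hDvr : ∑ x ∈ dnS (anc hT vr) vr, w x = w vr := by
      have : dnS (anc hT vr) vr = {vr} := by
        ext x
        simp only [dnS, Finset.mem_filter, Finset.mem_univ, true_and,
          Finset.mem_singleton]
        constructor
        · intro h; exact anc_antisymm hT vr h (anc_bot hT vr x)
        · rintro rfl; exact anc_refl _ _ _
      rw [this, Finset.sum_singleton]
    rw [hUvr, hDvr] at hF4
    have h34 : (3:ℝ)/4 ≤ ∑ c ∈ F, ∑ x ∈ upS (anc hT vr) c, w x := by linarith
    obtain ⟨G, hGF, hG14, hGc14⟩ := split_family F (fun c => ∑ x ∈ upS (anc hT vr) c, w x)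
      (fun c _ => Finset.sum_nonneg (fun x _ => hw x)) hF3 h34
    -- pairwise disjointness of the upsets of F
    have hPD : (↑F : Set V).PairwiseDisjoint (upS (anc hT vr)) := by
      intro c hc c' hc' hne
      simp only [Function.onFun]
      rw [Finset.disjoint_left]
      intro x hx hx'
      rw [upS, Finset.mem_filter] at hx hx'
      rcases anc_chain hT vr hx.2 hx'.2 with h | h
      · exact hF2 c (by exact hc) c' (by exact hc') hne h
      · exact hF2 c' (by exact hc') c (by exact hc) (Ne.symm hne) h
    refine ⟨G.biUnion (upS (anc hT vr)), (F \ G).biUnion (upS (anc hT vr)), ?_, ?_, ?_, ?_⟩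
    · rw [Finset.disjoint_left]
      intro x hx hx'
      rw [Finset.mem_biUnion] at hx hx'
      obtain ⟨c, hcG, hxc⟩ := hx
      obtain ⟨c', hc'FG, hxc'⟩ := hx'
      have hc'F := (Finset.mem_sdiff.1 hc'FG).1
      have hne : c ≠ c' := by
        rintro rfl; exact (Finset.mem_sdiff.1 hc'FG).2 hcG
      rw [upS, Finset.mem_filter] at hxc hxc'
      rcases anc_chain hT vr hxc.2 hxc'.2 with h | h
      · exact hF2 c (hGF hcG) c' hc'F hne h
      · exact hF2 c' hc'F c (hGF hcG) (Ne.symm hne) h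
    · rw [Finset.sum_biUnion (hPD.subset (by exact_mod_cast hGF))]
      exact hG14
    · rw [Finset.sum_biUnion (hPD.subset (by
        intro c hc
        exact_mod_cast (Finset.mem_sdiff.1 (by exact_mod_cast hc)).1))]
      exact hGc14
    · intro x hx y hy
      rw [Finset.mem_biUnion] at hx hy
      obtain ⟨c, hcG, hxc⟩ := hx
      obtain ⟨c', hc'FG, hyc'⟩ := hy
      have hc'F := (Finset.mem_sdiff.1 hc'FG).1
      have hcF := hGF hcG
      have hne : c ≠ c' := by
        rintro rfl; exact (Finset.mem_sdiff.1 hc'FG).2 hcG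
      rw [upS, Finset.mem_filter] at hxc hyc'
      rintro (hA | hA)
      · have hxy : anc hT vr x y := hA.2 (rpath hT vr y) (rpath_isPath hT vr y)
        have h1 : anc hT vr c y := anc_trans hT vr hxc.2 hxy
        rcases anc_chain hT vr h1 hyc'.2 with h | h
        · exact hF2 c hcF c' hc'F hne h
        · exact hF2 c' hc'F c hcF (Ne.symm hne) h
      · have hyx : anc hT vr y x := hA.2 (rpath hT vr x) (rpath_isPath hT vr x)
        have h1 : anc hT vr c' x := anc_trans hT vr hyc'.2 hyx
        rcases anc_chain hT vr hxc.2 h1 with h | h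
        · exact hF2 c hcF c' hc'F hne h
        · exact hF2 c' hc'F c hcF (Ne.symm hne) h
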